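/- Assume n = 2 and both agents have additive, normalized cost functions. Then (i) for every such instance there exists an EF1 allocation A with SC(A) ≤ (5/4)·OPT, and (ii) for every ε > 0 there exists such an instance in which every EF1 allocation A satisfies SC(A) ≥ (5/4 − ε)·OPT. Hence the price of EF1 for two agents with additive cost functions is 5/4. -/

import Mathlib

open Finset

/-- `T` is a `k`-partition of the bundle `S`: pairwise disjoint bundles whose union is `S`. -/
def IsPartitionOf {E : Type*} [DecidableEq E] {k : ℕ} (T : Fin k → Finset E) (S : Finset E) :
    Prop :=
  (∀ i j : Fin k, i ≠ j → Disjoint (T i) (T j)) ∧ Finset.univ.biUnion T = S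

/-- The maximin share of cost function `c` on `S` among `k` agents:
the minimum over `k`-partitions of `S` of the maximum cost of a bundle. -/
noncomputable def MMS {E : Type*} [DecidableEq E] (c : Finset E → ℝ) (k : ℕ) (S : Finset E) :
    ℝ :=
  sInf { m : ℝ | ∃ T : Fin k → Finset E, IsPartitionOf T S ∧ m = ⨆ j : Fin k, c (T j) }

/-- `c` is a nonnegative additive cost function. -/
def AdditiveCost {E : Type*} [DecidableEq E] (c : Finset E → ℝ) : Prop :=
  (∀ S : Finset E, 0 ≤ c S) ∧ ∀ S : Finset E, c S = ∑ e ∈ S, c {e}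

/-- `c` is a nonnegative monotone cost function with `c ∅ = 0`. -/
def MonotoneCost {E : Type*} (c : Finset E → ℝ) : Prop :=
  (∀ S : Finset E, 0 ≤ c S) ∧ c ∅ = 0 ∧ ∀ ⦃S T : Finset E⦄, S ⊆ T → c S ≤ c T

/-- `c` is subadditive. -/
def SubadditiveCost {E : Type*} [DecidableEq E] (c : Finset E → ℝ) : Prop :=
  ∀ S T : Finset E, c (S ∪ T) ≤ c S + c T

/-- `c` is submodular. -/
def SubmodularCost {E : Type*} [DecidableEq E] (c : Finset E → ℝ) : Prop :=
  ∀ S T : Finset E, c (S ∪ T) + c (S ∩ T) ≤ c S + c T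

/-- `A` is an allocation of all chores among the `n` agents. -/
def IsAllocation {E : Type*} [DecidableEq E] [Fintype E] {n : ℕ} (A : Fin n → Finset E) : Prop :=
  IsPartitionOf A Finset.univ

/-- `A` is `α`-envy-free. -/
def IsEF {E : Type*} {n : ℕ} (α : ℝ) (c : Fin n → Finset E → ℝ) (A : Fin n → Finset E) : Prop :=
  ∀ i j, c i (A i) ≤ α * c i (A j)

/-- `A` is `α`-envy-free up to one item. -/
def IsEF1 {E : Type*} [DecidableEq E] {n : ℕ} (α : ℝ) (c : Fin n → Finset E → ℝ)
    (A : Fin n → Finset E) : Prop :=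
  ∀ i j, i ≠ j → A i = ∅ ∨ ∃ e ∈ A i, c i (A i \ {e}) ≤ α * c i (A j)

/-- `A` is `α`-envy-free up to any (positive-cost) item. -/
def IsEFX {E : Type*} [DecidableEq E] {n : ℕ} (α : ℝ) (c : Fin n → Finset E → ℝ)
    (A : Fin n → Finset E) : Prop :=
  ∀ i j, i ≠ j → ∀ e ∈ A i, 0 < c i {e} → c i (A i \ {e}) ≤ α * c i (A j)

/-- `A` is an `α`-MMS allocation. -/
def IsMMSFair {E : Type*} [DecidableEq E] [Fintype E] {n : ℕ} (α : ℝ)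
    (c : Fin n → Finset E → ℝ) (A : Fin n → Finset E) : Prop :=
  ∀ i, c i (A i) ≤ α * MMS (c i) n Finset.univ

/-- `A` is an `α`-PMMS allocation. -/
def IsPMMS {E : Type*} [DecidableEq E] {n : ℕ} (α : ℝ)
    (c : Fin n → Finset E → ℝ) (A : Fin n → Finset E) : Prop :=
  ∀ i j, i ≠ j → c i (A i) ≤ α * MMS (c i) 2 (A i ∪ A j)

/-- The optimal (minimum) social cost over all allocations. -/
noncomputable def OPT {E : Type*} [DecidableEq E] [Fintype E] {n : ℕ}
    (c : Fin n → Finset E → ℝ) : ℝ :=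
  sInf { s : ℝ | ∃ A : Fin n → Finset E, IsAllocation A ∧ s = ∑ i, c i (A i) }




lemma arithA (x y z t u a sg sg' W' : ℝ)
    (hcheb' : W' * x ≤ sg' * z) (hzy : z ≤ y) (hxy : x ≤ y) (hu1 : u ≤ 1 - t)
    (hkey : 1 - (a + x) < x) (hsg'a : sg' + a = sg) (hxsg : x + sg = t)
    (ht1 : t ≤ 1) (hsg'0 : 0 ≤ sg') (hx0 : 0 < x) (hu0 : 0 ≤ u) :
    u + W' ≤ y := by
  have hxsg' : 1 - t ≤ x - sg' := by linarith
  have h2 : sg' * z ≤ sg' * y := mul_le_mul_of_nonneg_left hzy hsg'0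
  have h3 : (x - sg') * x ≤ (x - sg') * y :=
    mul_le_mul_of_nonneg_left hxy (by linarith)
  have h4 : u * x ≤ (x - sg') * x :=
    mul_le_mul_of_nonneg_right (le_trans hu1 hxsg') hx0.le
  have hfin : (u + W') * x ≤ y * x := by nlinarith [hcheb', h2, h3, h4]
  exact le_of_mul_le_mul_right hfin hx0

lemma arithB (x z t u sg W : ℝ)
    (hcheb : W * x ≤ sg * z) (hwoP : W + z ≤ 1 - u) (hxsg : x + sg = t)
    (hsg0 : 0 ≤ sg) (hsg2t : sg ≤ 2 * t - 1) (hu0 : 0 ≤ u) (hu1 : u ≤ 1 - t)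
    (hthalf : 1 / 2 < t) :
    x + (u + W) ≤ 5 / 4 * (t + u) := by
  have h5 : sg * (W + z) ≤ sg * (1 - u) := mul_le_mul_of_nonneg_left hwoP hsg0
  have hkey3 : (W - sg) * t ≤ sg * (1 - u - t) := by
    subst hxsg
    nlinarith [hcheb, h5]
  have hkey4 : sg * (1 - u - t) ≤ (2 * t - 1) * (1 - u - t) :=
    mul_le_mul_of_nonneg_right hsg2t (by linarith)
  have hkey5 : 4 * ((2 * t - 1) * (1 - u - t)) ≤ t * (t + u) := by
    nlinarith [sq_nonneg (3 * t - 2), hu0, hthalf]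
  have h6 : (4 * (W - sg)) * t ≤ (t + u) * t := by nlinarith [hkey3, hkey4, hkey5]
  have h7 : 4 * (W - sg) ≤ t + u := le_of_mul_le_mul_right h6 (by linarith)
  linarith

section Core
variable {E : Type} [DecidableEq E] [Fintype E]

lemma core_lemma (wv wo : E → ℝ) (hv : ∀ e, 0 ≤ wv e) (ho : ∀ e, 0 ≤ wo e)
    (hv1 : ∑ e, wv e = 1) (ho1 : ∑ e, wo e = 1)
    (P : Finset E) (hP : ∀ e ∈ P, wv e ≤ wo e) (hQ : ∀ e ∈ Pᶜ, wo e ≤ wv e)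
    (hne : P.Nonempty)
    (hviol : ∀ e ∈ P, ∑ x ∈ Pᶜ, wv x < ∑ x ∈ P \ {e}, wv x) :
    ∃ B : Finset E,
      (B = ∅ ∨ ∃ e ∈ B, ∑ x ∈ B \ {e}, wv x ≤ ∑ x ∈ Bᶜ, wv x) ∧
      (Bᶜ = ∅ ∨ ∃ e ∈ Bᶜ, ∑ x ∈ Bᶜ \ {e}, wo x ≤ ∑ x ∈ B, wo x) ∧
      (∑ x ∈ B, wv x) + (∑ x ∈ Bᶜ, wo x) ≤
        (5/4) * ((∑ x ∈ P, wv x) + (∑ x ∈ Pᶜ, wo x)) := by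
  classical
  set t : ℝ := ∑ x ∈ P, wv x with ht_def
  set u : ℝ := ∑ x ∈ Pᶜ, wo x with hu_def
  have hsumsn : ∀ (f : E → ℝ) (T : Finset E), (∀ e, 0 ≤ f e) → 0 ≤ ∑ x ∈ T, f x :=
    fun f T h => Finset.sum_nonneg fun e _ => h e
  have hPc : ∑ x ∈ Pᶜ, wv x = 1 - t := by
    have := Finset.sum_add_sum_compl P wv
    rw [hv1] at this; linarith
  have ht1 : t ≤ 1 := by
    have := hsumsn wv Pᶜ hv; linarith [hPc]
  have hu1 : u ≤ 1 - t := by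
    have h1 : u ≤ ∑ x ∈ Pᶜ, wv x := Finset.sum_le_sum fun e he => hQ e he
    linarith [hPc]
  have hu0 : 0 ≤ u := hsumsn wo Pᶜ ho
  have hsdiff_single : ∀ e ∈ P, ∑ x ∈ P \ {e}, wv x = t - wv e := by
    intro e he
    rw [Finset.sum_sdiff_eq_sub (Finset.singleton_subset_iff.mpr he), Finset.sum_singleton]
  have hsmall : ∀ e ∈ P, wv e < 2 * t - 1 := by
    intro e he
    have := hviol e he
    rw [hPc, hsdiff_single e he] at this
    linarith
  have hthalf : 1/2 < t := by
    obtain ⟨e0, he0⟩ := hne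
    have := hsmall e0 he0
    have := hv e0
    linarith
  -- positive-weight items
  set Pp : Finset E := P.filter (fun e => wv e ≠ 0) with hPp_def
  have hPpP : Pp ⊆ P := Finset.filter_subset _ _
  -- the predicate family
  set dc : Finset E → Prop := fun S => ∀ s ∈ S, ∀ r ∈ Pp \ S, wo s * wv r ≤ wo r * wv s
    with hdc_def
  set ef1v : Finset E → Prop := fun S =>
    (P \ S = ∅ ∨ ∃ e ∈ P \ S, ∑ x ∈ (P \ S) \ {e}, wv x ≤ ∑ x ∈ (P \ S)ᶜ, wv x) with hef1v_def
  set F : Finset (Finset E) := Pp.powerset.filter (fun S => dc S ∧ ef1v S) with hF_def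
  have hPpF : Pp ∈ F := by
    rw [hF_def, Finset.mem_filter]
    refine ⟨Finset.mem_powerset.mpr (Finset.Subset.refl _), ?_, ?_⟩
    · intro s hs r hr
      rw [Finset.sdiff_self] at hr
      exact absurd hr (Finset.notMem_empty r)
    · by_cases hE : P \ Pp = ∅
      · exact Or.inl hE
      · obtain ⟨e, he⟩ := Finset.nonempty_of_ne_empty hE
        refine Or.inr ⟨e, he, ?_⟩
        have hz : ∑ x ∈ (P \ Pp) \ {e}, wv x = 0 := by
          apply Finset.sum_eq_zero
          intro x hx
          have hx' : x ∈ P \ Pp := (Finset.mem_sdiff.mp hx).1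
          have := Finset.mem_sdiff.mp hx'
          rw [hPp_def] at this
          have := this.2
          simp only [Finset.mem_filter, not_and, ne_eq, not_not] at this
          exact this (Finset.mem_sdiff.mp hx').1
        rw [hz]
        exact hsumsn wv _ hv
  obtain ⟨S, hSF, hSmin⟩ := Finset.exists_min_image F Finset.card ⟨Pp, hPpF⟩
  rw [hF_def, Finset.mem_filter, Finset.mem_powerset] at hSF
  obtain ⟨hSPp, hSdc, hSef1⟩ := hSF
  have hSP : S ⊆ P := hSPp.trans hPpP
  -- S is nonempty
  have hSne : S.Nonempty := by
    rcases Finset.eq_empty_or_nonempty S with h | h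
    · exfalso
      rw [h] at hSef1
      rw [hef1v_def] at hSef1
      simp only [Finset.sdiff_empty] at hSef1
      rcases hSef1 with h1 | ⟨e, he, hle⟩
      · exact hne.ne_empty h1
      · exact absurd hle (not_le.mpr (hviol e he))
    · exact h
  -- max-ratio element
  obtain ⟨es, hesS, hesmax⟩ := Finset.exists_max_image S (fun s => wo s / wv s) hSne
  have hvpos : ∀ s ∈ S, 0 < wv s := by
    intro s hs
    have := hSPp hs
    rw [hPp_def, Finset.mem_filter] at this
    exact lt_of_le_of_ne (hv s) (Ne.symm this.2)
  have hesmax' : ∀ s ∈ S, wo s * wv es ≤ wo es * wv s := by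
    intro s hs
    have h := hesmax s hs
    rw [div_le_div_iff₀ (hvpos s hs) (hvpos es hesS)] at h
    linarith [h]
  set S' : Finset E := S.erase es with hS'_def
  have hS'S : S' ⊆ S := Finset.erase_subset _ _
  have hS'dc : dc S' := by
    intro s hs r hr
    have hsS : s ∈ S := hS'S hs
    rw [Finset.mem_sdiff] at hr
    by_cases hrS : r ∈ S
    · have : r = es := by
        by_contra hne'
        exact hr.2 (Finset.mem_erase.mpr ⟨hne', hrS⟩)
      rw [this]
      exact hesmax' s hsS
    · exact hSdc s hsS r (Finset.mem_sdiff.mpr ⟨hr.1, hrS⟩)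
  have hS'notF : ¬ ef1v S' := by
    intro hcon
    have hS'F : S' ∈ F := by
      rw [hF_def, Finset.mem_filter, Finset.mem_powerset]
      exact ⟨hS'S.trans hSPp, hS'dc, hcon⟩
    have := hSmin S' hS'F
    have hcard : S'.card < S.card := Finset.card_erase_lt_of_mem hesS
    omega
  -- unfold the failure of EF1 at S'
  simp only [hef1v_def] at hS'notF
  push_neg at hS'notF
  obtain ⟨hS'ne, hS'viol⟩ := hS'notF
  have hesP : es ∈ P := hSP hesS
  have hesPS' : es ∈ P \ S' := Finset.mem_sdiff.mpr ⟨hesP, Finset.notMem_erase es S⟩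
  have hid1 : (P \ S') \ {es} = P \ S := by
    ext x
    simp only [Finset.mem_sdiff, Finset.mem_erase, Finset.mem_singleton, hS'_def]
    constructor
    · rintro ⟨⟨hxP, hne'⟩, hxe⟩
      exact ⟨hxP, fun hS => hne' ⟨hxe, hS⟩⟩
    · rintro ⟨hxP, hS⟩
      exact ⟨⟨hxP, fun h => hS h.2⟩, fun h => hS (h ▸ hesS)⟩
  have hid2 : P \ S' = insert es (P \ S) := by
    ext x
    simp only [Finset.mem_sdiff, Finset.mem_erase, Finset.mem_insert, hS'_def]
    constructor
    · rintro ⟨hxP, hne'⟩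
      by_cases hx : x = es
      · exact Or.inl hx
      · exact Or.inr ⟨hxP, fun hS => hne' ⟨hx, hS⟩⟩
    · rintro (h | ⟨hxP, hS⟩)
      · exact ⟨h ▸ hesP, fun hc => hc.1 h⟩
      · exact ⟨hxP, fun hc => hS hc.2⟩
  have hid3 : (P \ S)ᶜ = Pᶜ ∪ S := by
    ext x
    simp only [Finset.mem_compl, Finset.mem_sdiff, Finset.mem_union]
    tauto
  set x : ℝ := ∑ e ∈ P \ S, wv e with hx_def
  set sg : ℝ := ∑ e ∈ S, wv e with hsg_def
  set a : ℝ := wv es with ha_def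
  set sg' : ℝ := ∑ e ∈ S', wv e with hsg'_def
  have hsg'a : sg' + a = sg := Finset.sum_erase_add S wv hesS
  have hxsg : x + sg = t := Finset.sum_sdiff hSP
  -- the pre-stop inequality
  have hkey : 1 - (a + x) < x := by
    have h := hS'viol es hesPS'
    rw [hid1] at h
    have hL : ∑ e ∈ (P \ S')ᶜ, wv e = 1 - (a + x) := by
      have h1 := Finset.sum_add_sum_compl (P \ S') wv
      rw [hv1] at h1
      have h2 : ∑ e ∈ P \ S', wv e = a + x := by
        rw [hid2, Finset.sum_insert (by simp [Finset.mem_sdiff, hesS])]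
      linarith
    rw [hL] at h
    exact h
  -- the positive remainder
  set Rp : Finset E := Pp \ S with hRp_def
  have hRpid : Rp = (P \ S).filter (fun e => wv e ≠ 0) := by
    ext e
    simp only [hRp_def, hPp_def, Finset.mem_sdiff, Finset.mem_filter]
    tauto
  have hRpx : ∑ e ∈ Rp, wv e = x := by
    rw [hRpid, hx_def, Finset.sum_filter_ne_zero]
  have hRpPS : Rp ⊆ P \ S := by
    rw [hRpid]; exact Finset.filter_subset _ _
  set z : ℝ := ∑ e ∈ Rp, wo e with hz_def
  set y : ℝ := ∑ e ∈ P \ S, wo e with hy_def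
  have hxy : x ≤ y := Finset.sum_le_sum fun e he => hP e (Finset.mem_sdiff.mp he).1
  have hzy : z ≤ y :=
    Finset.sum_le_sum_of_subset_of_nonneg hRpPS fun e _ _ => ho e
  have hcheb : (∑ e ∈ S, wo e) * x ≤ sg * z := by
    rw [← hRpx, hsg_def, hz_def, Finset.sum_mul_sum, Finset.sum_mul_sum]
    apply Finset.sum_le_sum
    intro s hs
    apply Finset.sum_le_sum
    intro r hr
    have := hSdc s hs r hr
    linarith
  have hcheb' : (∑ e ∈ S', wo e) * x ≤ sg' * z := by
    rw [← hRpx, hsg'_def, hz_def, Finset.sum_mul_sum, Finset.sum_mul_sum]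
    apply Finset.sum_le_sum
    intro s hs
    apply Finset.sum_le_sum
    intro r hr
    have := hSdc s (hS'S hs) r hr
    linarith
  have hPwo : ∑ e ∈ P, wo e = 1 - u := by
    have := Finset.sum_add_sum_compl P wo
    rw [ho1] at this; linarith
  have hwoP : (∑ e ∈ S, wo e) + z ≤ 1 - u := by
    have h1 : y + ∑ e ∈ S, wo e = 1 - u := by
      rw [hy_def, ← hPwo]
      exact Finset.sum_sdiff hSP
    linarith
  have ha2t : a < 2 * t - 1 := hsmall es hesP
  have hx0 : 0 < x := by linarith
  have hsg0 : 0 ≤ sg := hsumsn wv S hv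
  have hsg'0 : 0 ≤ sg' := hsumsn wv S' hv
  have hz0 : 0 ≤ z := hsumsn wo Rp ho
  have hwoS0 : 0 ≤ ∑ e ∈ S, wo e := hsumsn wo S ho
  have hwoS'0 : 0 ≤ ∑ e ∈ S', wo e := hsumsn wo S' ho
  have hsg2t : sg ≤ 2 * t - 1 := by linarith
  refine ⟨P \ S, ?_, ?_, ?_⟩
  · simpa only [hef1v_def] using hSef1
  · -- EF1 for the other agent
    refine Or.inr ⟨es, ?_, ?_⟩
    · rw [Finset.mem_compl, Finset.mem_sdiff]
      exact fun hc => hc.2 hesS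
    · have hid4 : (P \ S)ᶜ \ {es} = Pᶜ ∪ S' := by
        rw [hid3]
        ext e
        simp only [Finset.mem_sdiff, Finset.mem_union, Finset.mem_compl,
          Finset.mem_singleton, hS'_def, Finset.mem_erase]
        constructor
        · rintro ⟨h1 | h1, h2⟩
          · exact Or.inl h1
          · exact Or.inr ⟨h2, h1⟩
        · rintro (h1 | ⟨h1, h2⟩)
          · exact ⟨Or.inl h1, fun hc => h1 (hc ▸ hesP)⟩
          · exact ⟨Or.inr h2, h1⟩
      rw [hid4]
      have hdisj : Disjoint Pᶜ S' := by
        rw [Finset.disjoint_left]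
        intro e he hc
        exact (Finset.mem_compl.mp he) (hSP (hS'S hc))
      rw [Finset.sum_union hdisj]
      exact arithA x y z t u a sg sg' (∑ e ∈ S', wo e) hcheb' hzy hxy hu1 hkey
        hsg'a hxsg ht1 hsg'0 hx0 hu0
  · -- social cost bound
    have hLHS : ∑ e ∈ (P \ S)ᶜ, wo e = u + ∑ e ∈ S, wo e := by
      rw [hid3]
      have hdisj : Disjoint Pᶜ S := by
        rw [Finset.disjoint_left]
        intro e he hc
        exact (Finset.mem_compl.mp he) (hSP hc)
      rw [Finset.sum_union hdisj]
    rw [hLHS]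
    exact arithB x z t u sg (∑ e ∈ S, wo e) hcheb hwoP hxsg hsg0 hsg2t hu0 hu1 hthalf

end Core

section Helpers
variable {E : Type} [DecidableEq E] [Fintype E]

lemma biUnion_fin_two (A : Fin 2 → Finset E) :
    Finset.univ.biUnion A = A 0 ∪ A 1 := by
  ext e
  simp [Fin.exists_fin_two]

lemma alloc_snd {A : Fin 2 → Finset E} (h : IsAllocation A) : A 1 = (A 0)ᶜ := by
  obtain ⟨hd, hu⟩ := h
  rw [biUnion_fin_two] at hu
  have hdisj := hd 0 1 (by decide)
  ext e
  simp only [Finset.mem_compl]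
  constructor
  · intro he h0
    exact Finset.disjoint_left.mp hdisj h0 he
  · intro he
    have : e ∈ A 0 ∪ A 1 := hu ▸ Finset.mem_univ e
    rcases Finset.mem_union.mp this with h | h
    · exact absurd h he
    · exact h

lemma pair_alloc (B C : Finset E) (h : Disjoint B C) (h2 : B ∪ C = Finset.univ) :
    IsAllocation ![B, C] := by
  constructor
  · intro i j hij
    fin_cases i <;> fin_cases j <;> simp_all [Matrix.cons_val_zero, Matrix.cons_val_one]
    exact h.symm
  · rw [biUnion_fin_two]
    simpa using h2

lemma pair_alloc_compl (B : Finset E) : IsAllocation ![B, Bᶜ] :=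
  pair_alloc B Bᶜ disjoint_compl_right (Finset.union_compl B)

lemma pair_alloc_compl' (B : Finset E) : IsAllocation ![Bᶜ, B] :=
  pair_alloc Bᶜ B disjoint_compl_left (by rw [Finset.union_comm]; exact Finset.union_compl B)

lemma ef1_pair (c : Fin 2 → Finset E → ℝ) (A : Fin 2 → Finset E)
    (h01 : A 0 = ∅ ∨ ∃ e ∈ A 0, c 0 (A 0 \ {e}) ≤ 1 * c 0 (A 1))
    (h10 : A 1 = ∅ ∨ ∃ e ∈ A 1, c 1 (A 1 \ {e}) ≤ 1 * c 1 (A 0)) : IsEF1 1 c A := by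
  intro i j hij
  fin_cases i <;> fin_cases j <;>
    first
      | exact absurd rfl hij
      | exact h01
      | exact h10

end Helpers

theorem part_one {E : Type} [DecidableEq E] [Fintype E] (c : Fin 2 → Finset E → ℝ)
    (hadd : ∀ i, AdditiveCost (c i)) (hnorm : ∀ i, c i Finset.univ = 1) :
    ∃ A : Fin 2 → Finset E, IsAllocation A ∧ IsEF1 1 c A ∧
      ∑ i, c i (A i) ≤ (5 / 4) * OPT c := by
  classical
  set w : Fin 2 → E → ℝ := fun i e => c i {e} with hw_def
  have hc : ∀ i S, c i S = ∑ e ∈ S, w i e := fun i S => (hadd i).2 S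
  have hw0 : ∀ i e, 0 ≤ w i e := fun i e => (hadd i).1 {e}
  have hw1 : ∀ i : Fin 2, ∑ e, w i e = 1 := by
    intro i
    rw [← hc i Finset.univ]
    exact hnorm i
  set O : Finset E := Finset.univ.filter (fun e => w 0 e ≤ w 1 e) with hO_def
  have hOmem : ∀ e ∈ O, w 0 e ≤ w 1 e := by
    intro e he
    exact (Finset.mem_filter.mp he).2
  have hOcmem : ∀ e ∈ Oᶜ, w 1 e ≤ w 0 e := by
    intro e he
    have := Finset.mem_compl.mp he
    rw [hO_def] at this
    simp only [Finset.mem_filter, Finset.mem_univ, true_and] at this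
    linarith [not_le.mp this]
  have hmopt : ∀ B : Finset E,
      (∑ e ∈ O, w 0 e) + (∑ e ∈ Oᶜ, w 1 e) ≤ (∑ e ∈ B, w 0 e) + (∑ e ∈ Bᶜ, w 1 e) := by
    intro B
    have h1 : ∀ T : Finset E,
        (∑ e ∈ T, min (w 0 e) (w 1 e)) + (∑ e ∈ Tᶜ, min (w 0 e) (w 1 e))
          = ∑ e, min (w 0 e) (w 1 e) := fun T => Finset.sum_add_sum_compl T _
    have h2 : ∑ e ∈ O, min (w 0 e) (w 1 e) = ∑ e ∈ O, w 0 e :=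
      Finset.sum_congr rfl fun e he => min_eq_left (hOmem e he)
    have h3 : ∑ e ∈ Oᶜ, min (w 0 e) (w 1 e) = ∑ e ∈ Oᶜ, w 1 e :=
      Finset.sum_congr rfl fun e he => min_eq_right (hOcmem e he)
    have h4 : ∑ e ∈ B, min (w 0 e) (w 1 e) ≤ ∑ e ∈ B, w 0 e :=
      Finset.sum_le_sum fun e _ => min_le_left _ _
    have h5 : ∑ e ∈ Bᶜ, min (w 0 e) (w 1 e) ≤ ∑ e ∈ Bᶜ, w 1 e :=
      Finset.sum_le_sum fun e _ => min_le_right _ _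
    have := h1 O
    have := h1 B
    linarith
  have hOPTlb : (∑ e ∈ O, w 0 e) + (∑ e ∈ Oᶜ, w 1 e) ≤ OPT c := by
    apply le_csInf
    · exact ⟨∑ i, c i (![O, Oᶜ] i), ![O, Oᶜ], pair_alloc_compl O, rfl⟩
    · rintro s ⟨A, hA, rfl⟩
      have hA1 : A 1 = (A 0)ᶜ := alloc_snd hA
      rw [Fin.sum_univ_two, hc, hc, hA1]
      exact hmopt (A 0)
  have hm0 : 0 ≤ (∑ e ∈ O, w 0 e) + (∑ e ∈ Oᶜ, w 1 e) := by
    have := Finset.sum_nonneg fun e (_ : e ∈ O) => hw0 0 e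
    have := Finset.sum_nonneg fun e (_ : e ∈ Oᶜ) => hw0 1 e
    linarith
  have hOPT0 : 0 ≤ OPT c := le_trans hm0 hOPTlb
  have hfinal : ∀ B : Finset E,
      (∑ e ∈ B, w 0 e) + (∑ e ∈ Bᶜ, w 1 e) ≤
        (5/4) * ((∑ e ∈ O, w 0 e) + (∑ e ∈ Oᶜ, w 1 e)) →
      ∑ i, c i (![B, Bᶜ] i) ≤ (5 / 4) * OPT c := by
    intro B hB
    rw [Fin.sum_univ_two]
    simp only [Matrix.cons_val_zero, Matrix.cons_val_one, Matrix.head_cons]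
    rw [hc, hc]
    calc (∑ e ∈ B, w 0 e) + (∑ e ∈ Bᶜ, w 1 e)
        ≤ (5/4) * ((∑ e ∈ O, w 0 e) + (∑ e ∈ Oᶜ, w 1 e)) := hB
      _ ≤ (5/4) * OPT c := by linarith [hOPTlb]
  by_cases h0 : O = ∅ ∨ ∃ e ∈ O, ∑ x ∈ O \ {e}, w 0 x ≤ ∑ x ∈ Oᶜ, w 0 x
  · by_cases h1 : Oᶜ = ∅ ∨ ∃ e ∈ Oᶜ, ∑ x ∈ Oᶜ \ {e}, w 1 x ≤ ∑ x ∈ O, w 1 x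
    · -- the optimal allocation is itself EF1
      refine ⟨![O, Oᶜ], pair_alloc_compl O, ?_, ?_⟩
      · apply ef1_pair
        · rcases h0 with h | ⟨e, he, hle⟩
          · exact Or.inl h
          · exact Or.inr ⟨e, he, by rw [hc, hc, one_mul]; exact hle⟩
        · rcases h1 with h | ⟨e, he, hle⟩
          · exact Or.inl h
          · exact Or.inr ⟨e, he, by rw [hc, hc, one_mul]; exact hle⟩
      · exact hfinal O (by linarith)
    · -- agent 1 violates EF1 in the optimal allocation
      push_neg at h1
      obtain ⟨h1ne, h1v⟩ := h1
      have hviol : ∀ e ∈ Oᶜ, ∑ x ∈ Oᶜᶜ, w 1 x < ∑ x ∈ Oᶜ \ {e}, w 1 x := by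
        intro e he
        rw [compl_compl]
        exact h1v e he
      obtain ⟨B, hB1, hB2, hB3⟩ := core_lemma (w 1) (w 0) (hw0 1) (hw0 0) (hw1 1) (hw1 0)
        Oᶜ hOcmem (by rw [compl_compl]; exact hOmem)
        h1ne hviol
      refine ⟨![Bᶜ, B], pair_alloc_compl' B, ?_, ?_⟩
      · apply ef1_pair
        · rcases hB2 with h | ⟨e, he, hle⟩
          · exact Or.inl h
          · exact Or.inr ⟨e, he, by rw [hc, hc, one_mul]; exact hle⟩
        · rcases hB1 with h | ⟨e, he, hle⟩
          · exact Or.inl h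
          · exact Or.inr ⟨e, he, by rw [hc, hc, one_mul]; exact hle⟩
      · rw [Fin.sum_univ_two]
        simp only [Matrix.cons_val_zero, Matrix.cons_val_one, Matrix.head_cons]
        rw [hc, hc]
        have hrw : ∑ x ∈ Oᶜᶜ, w 0 x = ∑ e ∈ O, w 0 e := by rw [compl_compl]
        calc (∑ e ∈ Bᶜ, w 0 e) + (∑ e ∈ B, w 1 e)
            = (∑ x ∈ B, w 1 x) + (∑ x ∈ Bᶜ, w 0 x) := by ring
          _ ≤ (5/4) * ((∑ x ∈ Oᶜ, w 1 x) + (∑ x ∈ Oᶜᶜ, w 0 x)) := hB3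
          _ = (5/4) * ((∑ e ∈ O, w 0 e) + (∑ e ∈ Oᶜ, w 1 e)) := by rw [hrw]; ring
          _ ≤ (5/4) * OPT c := by linarith [hOPTlb]
  · -- agent 0 violates EF1 in the optimal allocation
    push_neg at h0
    obtain ⟨h0ne, h0v⟩ := h0
    obtain ⟨B, hB1, hB2, hB3⟩ := core_lemma (w 0) (w 1) (hw0 0) (hw0 1) (hw1 0) (hw1 1)
      O hOmem hOcmem h0ne h0v
    refine ⟨![B, Bᶜ], pair_alloc_compl B, ?_, ?_⟩
    · apply ef1_pair
      · rcases hB1 with h | ⟨e, he, hle⟩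
        · exact Or.inl h
        · exact Or.inr ⟨e, he, by rw [hc, hc, one_mul]; exact hle⟩
      · rcases hB2 with h | ⟨e, he, hle⟩
        · exact Or.inl h
        · exact Or.inr ⟨e, he, by rw [hc, hc, one_mul]; exact hle⟩
    · exact hfinal B hB3

theorem part_two (ε : ℝ) (hε : 0 < ε) :
    ∃ (m : ℕ) (c : Fin 2 → Finset (Fin m) → ℝ),
      (∀ i, AdditiveCost (c i)) ∧ (∀ i, c i Finset.univ = 1) ∧
      ∀ A : Fin 2 → Finset (Fin m), IsAllocation A → IsEF1 1 c A →
        (5 / 4 - ε) * OPT c ≤ ∑ i, c i (A i) := by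
  classical
  set ε' : ℝ := min ε (1/8) with hε'_def
  have hε'0 : 0 < ε' := lt_min hε (by norm_num)
  have hε'8 : ε' ≤ 1/8 := min_le_right _ _
  have hε'ε : ε' ≤ ε := min_le_left _ _
  have h3 : (0:ℝ) < 3 - 4 * ε' := by linarith
  set t : ℝ := 1 / (3 - 4 * ε') with ht_def
  have htkey : (3 - 4 * ε') * t = 1 := by
    rw [ht_def]; field_simp
  have ht13 : 1/3 < t := by
    rw [ht_def]
    rw [lt_div_iff₀ h3]
    linarith
  have ht25 : t ≤ 2/5 := by
    rw [ht_def, div_le_iff₀ h3]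
    linarith
  refine ⟨3, fun i S => ∑ e ∈ S, (if i = 0 then (if e = 0 then 1 - 2*t else t)
    else (if e = 0 then 0 else 1/2)), ?_, ?_, ?_⟩
  · -- additive
    intro i
    constructor
    · intro S
      apply Finset.sum_nonneg
      intro e _
      by_cases hi : i = 0 <;> by_cases he : e = (0 : Fin 3) <;>
        simp [hi, he] <;> linarith
    · intro S
      apply Finset.sum_congr rfl
      intro e _
      exact (Finset.sum_singleton _ _).symm
  · -- normalized
    intro i
    have f20 : ((2:Fin 3) = 0) ↔ False := by decide
    have f10 : ((1:Fin 3) = 0) ↔ False := by decide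
    by_cases hi : i = 0 <;>
      · simp only [hi, Fin.sum_univ_three, f20, f10, if_true, if_false,
          if_neg (fun h => h), reduceIte]
        norm_num
        try ring
  · -- every EF1 allocation is expensive
    intro A hA hEF1
    set c : Fin 2 → Finset (Fin 3) → ℝ := fun i S => ∑ e ∈ S, (if i = 0 then
      (if e = 0 then 1 - 2*t else t) else (if e = 0 then 0 else 1/2)) with hc_def
    show (5 / 4 - ε) * OPT c ≤ ∑ i, c i (A i)
    have hA1 : A 1 = (A 0)ᶜ := alloc_snd hA
    -- OPT bounds
    have hBdd : ∀ s ∈ { s : ℝ | ∃ B : Fin 2 → Finset (Fin 3), IsAllocation B ∧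
        s = ∑ i, c i (B i) }, 0 ≤ s := by
      rintro s ⟨B, hB, rfl⟩
      apply Finset.sum_nonneg
      intro i _
      apply Finset.sum_nonneg
      intro e _
      by_cases hi : i = 0 <;> by_cases he : e = (0 : Fin 3) <;>
        simp [hi, he] <;> linarith
    have hOPT0 : 0 ≤ OPT c := le_csInf
      ⟨∑ i, c i (![Finset.univ, Finset.univᶜ] i), ![Finset.univ, Finset.univᶜ],
        pair_alloc_compl Finset.univ, rfl⟩ hBdd
    have hval : ∑ i, c i (![({1, 2} : Finset (Fin 3)), ({1, 2} : Finset (Fin 3))ᶜ] i)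
        = 2 * t := by
      rw [Fin.sum_univ_two]
      have hcomp : ({1, 2} : Finset (Fin 3))ᶜ = {0} := by decide
      simp only [Matrix.cons_val_zero, Matrix.cons_val_one, Matrix.head_cons, hcomp, hc_def]
      rw [show ({1,2} : Finset (Fin 3)) = insert 1 {2} from rfl,
        Finset.sum_insert (by decide), Finset.sum_singleton, Finset.sum_singleton]
      have f20 : ((2:Fin 3) = 0) ↔ False := by decide
      have f10 : ((1:Fin 3) = 0) ↔ False := by decide
      have g10 : ((1:Fin 2) = 0) ↔ False := by decide
      simp only [f20, f10, g10, if_false, reduceIte]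
      ring
    have hOPTle : OPT c ≤ 2 * t := by
      apply csInf_le ⟨0, hBdd⟩
      exact ⟨![({1, 2} : Finset (Fin 3)), ({1, 2} : Finset (Fin 3))ᶜ],
        pair_alloc_compl _, hval.symm⟩
    have hchain : (5 / 4 - ε) * OPT c ≤ t + 1/2 := by
      have h1 : (5 / 4 - ε) * OPT c ≤ (5 / 4 - ε') * OPT c := by nlinarith
      have h2 : (5 / 4 - ε') * OPT c ≤ (5 / 4 - ε') * (2 * t) := by nlinarith
      have h3' : (5 / 4 - ε') * (2 * t) = t + 1/2 := by nlinarith [htkey]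
      linarith
    have hSC : ∑ i, c i (A i) = c 0 (A 0) + c 1 ((A 0)ᶜ) := by
      rw [Fin.sum_univ_two, hA1]
    rw [hSC]
    have g10 : ((1:Fin 2) = 0) ↔ False := by decide
    apply le_trans hchain
    have h01 := hEF1 0 1 (by decide)
    have h10 := hEF1 1 0 (by decide)
    rw [hA1] at h01 h10
    have hcases : ∀ S : Finset (Fin 3), S = ∅ ∨ S = {0} ∨ S = {1} ∨ S = {2} ∨
        S = {0,1} ∨ S = {0,2} ∨ S = {1,2} ∨ S = {0,1,2} := by decide
    have f20 : ((2:Fin 3) = 0) ↔ False := by decide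
    have f10 : ((1:Fin 3) = 0) ↔ False := by decide
    -- sum evaluation helpers
    have hpair : ∀ (f : Fin 3 → ℝ) (a b : Fin 3), a ≠ b →
        ∑ e ∈ ({a, b} : Finset (Fin 3)), f e = f a + f b := by
      intro f a b hab
      rw [show ({a, b} : Finset (Fin 3)) = insert a {b} from rfl,
        Finset.sum_insert (by simp [hab]), Finset.sum_singleton]
    rcases hcases (A 0) with h|h|h|h|h|h|h|h <;> rw [h] at h01 h10 ⊢
    · -- A 0 = ∅ : agent 1 has everything, not EF1
      exfalso
      rw [show (∅ : Finset (Fin 3))ᶜ = {0,1,2} by decide] at h10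
      rcases h10 with hbad | ⟨e, he, hle⟩
      · exact absurd hbad (by decide)
      · fin_cases he <;>
          simp only [hc_def, show ({0,1,2} : Finset (Fin 3)) \ {0} = {1,2} by decide,
            show ({0,1,2} : Finset (Fin 3)) \ {1} = {0,2} by decide,
            show ({0,1,2} : Finset (Fin 3)) \ {2} = {0,1} by decide,
            Finset.sum_empty] at hle <;>
          rw [hpair _ _ _ (by decide)] at hle <;> simp only [f20, f10, g10, if_false, reduceIte] at hle <;> norm_num at hle
    · -- A 0 = {0}
      exfalso
      rw [show ({0} : Finset (Fin 3))ᶜ = {1,2} by decide] at h10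
      rcases h10 with hbad | ⟨e, he, hle⟩
      · exact absurd hbad (by decide)
      · fin_cases he <;>
          simp only [hc_def, show ({1,2} : Finset (Fin 3)) \ {1} = {2} by decide,
            show ({1,2} : Finset (Fin 3)) \ {2} = {1} by decide,
            Finset.sum_singleton] at hle <;> simp only [f20, f10, g10, if_false, reduceIte] at hle <;> norm_num at hle
    · -- A 0 = {1}
      rw [show ({1} : Finset (Fin 3))ᶜ = {0,2} by decide]
      simp only [hc_def, Finset.sum_singleton]
      rw [hpair _ _ _ (by decide)]
      simp only [f20, f10, g10, if_false, reduceIte]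
      norm_num
    · -- A 0 = {2}
      rw [show ({2} : Finset (Fin 3))ᶜ = {0,1} by decide]
      simp only [hc_def, Finset.sum_singleton]
      rw [hpair _ _ _ (by decide)]
      simp only [f20, f10, g10, if_false, reduceIte]
      norm_num
    · -- A 0 = {0,1}
      rw [show ({0,1} : Finset (Fin 3))ᶜ = {2} by decide]
      simp only [hc_def, Finset.sum_singleton]
      rw [hpair _ _ _ (by decide)]
      simp only [f20, f10, g10, if_false, reduceIte]
      norm_num
      linarith
    · -- A 0 = {0,2}
      rw [show ({0,2} : Finset (Fin 3))ᶜ = {1} by decide]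
      simp only [hc_def, Finset.sum_singleton]
      rw [hpair _ _ _ (by decide)]
      simp only [f20, f10, g10, if_false, reduceIte]
      norm_num
      linarith
    · -- A 0 = {1,2} : agent 0 not EF1
      exfalso
      rcases h01 with hbad | ⟨e, he, hle⟩
      · exact absurd hbad (by decide)
      · rw [show ({1,2} : Finset (Fin 3))ᶜ = {0} by decide] at hle
        fin_cases he <;>
          simp only [hc_def, show ({1,2} : Finset (Fin 3)) \ {1} = {2} by decide,
            show ({1,2} : Finset (Fin 3)) \ {2} = {1} by decide,
            Finset.sum_singleton] at hle <;> simp only [f20, f10, g10, if_false, reduceIte] at hle <;> norm_num at hle <;> linarith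
    · -- A 0 = {0,1,2} : agent 0 not EF1
      exfalso
      rcases h01 with hbad | ⟨e, he, hle⟩
      · exact absurd hbad (by decide)
      · rw [show ({0,1,2} : Finset (Fin 3))ᶜ = ∅ by decide] at hle
        fin_cases he <;>
          simp only [hc_def, show ({0,1,2} : Finset (Fin 3)) \ {0} = {1,2} by decide,
            show ({0,1,2} : Finset (Fin 3)) \ {1} = {0,2} by decide,
            show ({0,1,2} : Finset (Fin 3)) \ {2} = {0,1} by decide,
            Finset.sum_empty] at hle <;>
          rw [hpair _ _ _ (by decide)] at hle <;> simp only [f20, f10, g10, if_false, reduceIte] at hle <;> norm_num at hle <;> linarith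

/-- Proposition 7.1: for two agents with additive normalized cost functions, the price of
EF1 is `5/4`: every instance admits an EF1 allocation of social cost at most `(5/4)·OPT`,
and for every `ε > 0` some instance forces every EF1 allocation to have social cost at
least `(5/4 - ε)·OPT`. -/
theorem price_of_EF1_two_agents :
    (∀ (E : Type) [DecidableEq E] [Fintype E] (c : Fin 2 → Finset E → ℝ),
      (∀ i, AdditiveCost (c i)) → (∀ i, c i Finset.univ = 1) →
      ∃ A : Fin 2 → Finset E, IsAllocation A ∧ IsEF1 1 c A ∧
        ∑ i, c i (A i) ≤ (5 / 4) * OPT c) ∧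
    (∀ ε : ℝ, 0 < ε →
      ∃ (m : ℕ) (c : Fin 2 → Finset (Fin m) → ℝ),
        (∀ i, AdditiveCost (c i)) ∧ (∀ i, c i Finset.univ = 1) ∧
        ∀ A : Fin 2 → Finset (Fin m), IsAllocation A → IsEF1 1 c A →
          (5 / 4 - ε) * OPT c ≤ ∑ i, c i (A i)) := by
  constructor
  · intro E _ _ c hadd hnorm
    exact part_one c hadd hnorm
  · exact part_two
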